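/- Correctness of the Gumbel-Max SCM encoding of an MDP: with the trajectory X_0(ω), …, X_{T−1}(ω) defined by the Gumbel-Max recursion, for every 1 ≤ k ≤ T and every finite state sequence τ_0, …, τ_{k−1} ∈ S, the probability (under the product Gumbel noise measure) of the event { ω : X_t(ω) = τ_t for all 0 ≤ t < k } equals ρ(τ_0) · ∏_{t=0}^{k−2} K(τ_t)(π(τ_t))(τ_{t+1}). In particular, realizations of the Gumbel-Max SCM have exactly the path probabilities of the MDP under policy π, and the cylinder set of trajectories extending a finite prefix τ has probability equal to the MDP probability of τ. -/

import Mathlib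

open MeasureTheory Real

/-- The uniform probability measure on the open interval (0,1). -/
noncomputable def uniform01 : Measure ℝ := volume.restrict (Set.Ioo (0 : ℝ) 1)

/-- The standard Gumbel distribution on ℝ: the pushforward of the uniform
measure on (0,1) under `u ↦ -log(-log u)`; its CDF is `x ↦ exp (-exp (-x))`. -/
noncomputable def stdGumbel : Measure ℝ :=
  uniform01.map (fun u : ℝ => -Real.log (-Real.log u))

/-- The product measure on `S → ℝ` with i.i.d. standard Gumbel coordinates. -/
noncomputable def gumbelPi (S : Type*) [Fintype S] : Measure (S → ℝ) :=
  Measure.pi (fun _ : S => stdGumbel)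

open Classical in
/-- The strict argmax of `s ↦ c s + g s`, when it exists (arbitrary otherwise). -/
noncomputable def strictArgmax {S : Type*} [Fintype S] [Nonempty S]
    (c g : S → ℝ) : S :=
  if h : ∃ i : S, ∀ j : S, j ≠ i → c j + g j < c i + g i then h.choose
  else Classical.arbitrary S

/-- The Gumbel-Max SCM trajectory of an MDP with initial distribution `ρ`,
transition kernel `K`, deterministic policy `pol`, driven by the exogenous
noise sequence `ω`. -/
noncomputable def gmTraj {S : Type*} [Fintype S] [Nonempty S] {A : Type*}
    (ρ : S → ℝ) (K : S → A → S → ℝ) (pol : S → A) (ω : ℕ → S → ℝ) : ℕ → S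
  | 0 => strictArgmax (fun s => Real.log (ρ s)) (ω 0)
  | t + 1 =>
      strictArgmax
        (fun s => Real.log (K (gmTraj ρ K pol ω t) (pol (gmTraj ρ K pol ω t)) s))
        (ω (t + 1))

/-- Extend a finitely-indexed noise vector to an ℕ-indexed one (zero outside). -/
def extendNoise {S : Type*} (T : ℕ) (ω : Fin T → S → ℝ) : ℕ → S → ℝ :=
  fun t => if h : t < T then ω ⟨t, h⟩ else fun _ => 0

namespace GMAux

open Set Function
open scoped ENNReal

lemma measurable_phi : Measurable (fun u : ℝ => -Real.log (-Real.log u)) :=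
  (Real.measurable_log.comp Real.measurable_log.neg).neg

instance : IsProbabilityMeasure uniform01 := by
  constructor; simp [uniform01, Real.volume_Ioo]

instance : IsProbabilityMeasure stdGumbel := by
  unfold stdGumbel
  exact Measure.isProbabilityMeasure_map measurable_phi.aemeasurable

instance (S : Type*) [Fintype S] : IsProbabilityMeasure (gumbelPi S) := by
  unfold gumbelPi; infer_instance

lemma measurePreserving_Phi (S : Type*) [Fintype S] :
    MeasurePreserving (fun (u : S → ℝ) (s : S) => -Real.log (-Real.log (u s)))
      (Measure.pi fun _ : S => uniform01) (gumbelPi S) :=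
  measurePreserving_pi (fun _ : S => uniform01) (fun _ : S => stdGumbel)
    (fun _ => ⟨measurable_phi, rfl⟩)

lemma lmarginal_congr_on {δ : Type*} [DecidableEq δ] {X : δ → Type*} [∀ x, MeasurableSpace (X x)]
    {μ : ∀ i, Measure (X i)} {s : Finset δ} {f g : (∀ i, X i) → ℝ≥0∞} (w : ∀ i, X i)
    (h : ∀ u, (∀ j ∉ s, u j = w j) → f u = g u) :
    (∫⋯∫⁻_s, f ∂μ) w = (∫⋯∫⁻_s, g ∂μ) w := by
  refine lintegral_congr (fun y => ?_)
  refine h _ (fun j hj => ?_)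
  simp [Function.updateFinset, hj]

lemma lmarginal_prod {ι : Type*} [Fintype ι] [DecidableEq ι] {μ : Measure ℝ} [SigmaFinite μ]
    (h : ι → ℝ → ℝ≥0∞) (hm : ∀ j, Measurable (h j)) (s : Finset ι) (w : ι → ℝ) :
    (∫⋯∫⁻_s, (fun u => ∏ j, h j (u j)) ∂(fun _ => μ)) w
      = (∏ j ∈ s, ∫⁻ y, h j y ∂μ) * ∏ j ∈ sᶜ, h j (w j) := by
  have hF : Measurable (fun u : ι → ℝ => ∏ j, h j (u j)) :=
    Finset.measurable_prod _ (fun j _ => (hm j).comp (measurable_pi_apply j))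
  induction s using Finset.induction generalizing w with
  | empty => simp
  | @insert i s hi ih =>
    rw [lmarginal_insert _ hF hi w]
    have key : ∀ x : ℝ,
        (∫⋯∫⁻_s, (fun u => ∏ j, h j (u j)) ∂(fun _ => μ)) (Function.update w i x)
          = ((∏ j ∈ s, ∫⁻ y, h j y ∂μ) * ∏ j ∈ sᶜ.erase i, h j (w j)) * h i x := by
      intro x
      rw [ih]
      have hisc : i ∈ sᶜ := Finset.mem_compl.2 hi
      rw [← Finset.mul_prod_erase sᶜ _ hisc, Function.update_self]
      have : ∏ j ∈ sᶜ.erase i, h j (Function.update w i x j)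
          = ∏ j ∈ sᶜ.erase i, h j (w j) := by
        refine Finset.prod_congr rfl (fun j hj => ?_)
        rw [Function.update_of_ne (Finset.ne_of_mem_erase hj)]
      rw [this]; ring
    simp_rw [key]
    rw [lintegral_const_mul _ (hm i), Finset.prod_insert hi, Finset.compl_insert]
    ring

lemma lintegral_rpow_Ioo {a : ℝ} (ha : 0 ≤ a) :
    ∫⁻ x in Set.Ioo (0:ℝ) 1, ENNReal.ofReal (x ^ a) ∂volume
      = ENNReal.ofReal (1 / (a + 1)) := by
  have ha1 : (0:ℝ) < a + 1 := by linarith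
  have hInt : IntegrableOn (fun x : ℝ => x ^ a) (Set.Ioo 0 1) volume := by
    have := (intervalIntegral.intervalIntegrable_rpow' (a := (0:ℝ)) (b := 1)
      (by linarith : (-1:ℝ) < a))
    rw [intervalIntegrable_iff_integrableOn_Ioc_of_le zero_le_one] at this
    exact this.mono_set Set.Ioo_subset_Ioc_self
  rw [← ofReal_integral_eq_lintegral_ofReal hInt]
  · congr 1
    rw [← MeasureTheory.integral_Ioc_eq_integral_Ioo,
      ← intervalIntegral.integral_of_le zero_le_one,
      integral_rpow (Or.inl (by linarith : (-1:ℝ) < a))]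
    rw [Real.one_rpow, Real.zero_rpow ha1.ne']
    ring
  · refine (ae_restrict_iff' measurableSet_Ioo).2 (Filter.Eventually.of_forall ?_)
    exact fun x hx => Real.rpow_nonneg hx.1.le a

open Classical in
lemma uniformPi_D {S : Type*} [Fintype S] (p : S → ℝ) (hp : ∀ s, 0 < p s)
    (hsum : ∑ s, p s = 1) (i : S) :
    (Measure.pi fun _ : S => uniform01)
      {u : S → ℝ | ∀ j, u j ∈
        (if j = i then Ioo (0:ℝ) 1 else Ioo 0 1 ∩ Iio ((u i) ^ (p j / p i)))}
      = ENNReal.ofReal (p i) := by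
  classical
  have hpi := hp i
  have hpil : p i ≤ 1 := by
    calc p i ≤ ∑ s, p s := Finset.single_le_sum (fun s _ => (hp s).le) (Finset.mem_univ i)
    _ = 1 := hsum
  set a : ℝ := (1 - p i) / p i with ha_def
  have hsume : ∑ j ∈ Finset.univ.erase i, p j / p i = a := by
    rw [← Finset.sum_div, Finset.sum_erase_eq_sub (Finset.mem_univ i), hsum]
  have ha : 0 ≤ a := div_nonneg (by linarith) hpi.le
  set h : S → ℝ → ℝ → ℝ≥0∞ := fun j x =>
    Set.indicator (if j = i then Ioo (0:ℝ) 1 else Ioo 0 1 ∩ Iio (x ^ (p j / p i)))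
      (1 : ℝ → ℝ≥0∞) with hh_def
  have hmeas_h : ∀ j x, Measurable (h j x) := by
    intro j x
    refine measurable_one.indicator ?_
    split_ifs
    · exact measurableSet_Ioo
    · exact measurableSet_Ioo.inter measurableSet_Iio
  set D : Set (S → ℝ) := {u : S → ℝ | ∀ j, u j ∈
      (if j = i then Ioo (0:ℝ) 1 else Ioo 0 1 ∩ Iio ((u i) ^ (p j / p i)))} with hD_def
  have hDset : MeasurableSet D := by
    have : D = ⋂ j, {u : S → ℝ | u j ∈
        (if j = i then Ioo (0:ℝ) 1 else Ioo 0 1 ∩ Iio ((u i) ^ (p j / p i)))} := by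
      ext u; simp [hD_def, Set.mem_iInter]
    rw [this]
    refine MeasurableSet.iInter (fun j => ?_)
    by_cases hj : j = i
    · simp only [hj, if_pos rfl]
      exact (measurable_pi_apply i) measurableSet_Ioo
    · simp only [if_neg hj]
      have h1 : MeasurableSet {u : S → ℝ | u j ∈ Ioo (0:ℝ) 1} :=
        (measurable_pi_apply j) measurableSet_Ioo
      have h2 : MeasurableSet {u : S → ℝ | u j < (u i) ^ (p j / p i)} := by
        refine measurableSet_lt (measurable_pi_apply j) ?_
        have : Measurable (fun x : ℝ => x ^ (p j / p i)) := by measurability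
        exact this.comp (measurable_pi_apply i)
      have : {u : S → ℝ | u j ∈ Ioo (0:ℝ) 1 ∩ Iio ((u i) ^ (p j / p i))}
          = {u : S → ℝ | u j ∈ Ioo (0:ℝ) 1} ∩ {u : S → ℝ | u j < (u i) ^ (p j / p i)} := by
        ext u; simp [Set.mem_inter_iff, Set.mem_setOf_eq, and_assoc]
      rw [this]; exact h1.inter h2
  have hind : ∀ u : S → ℝ, D.indicator (1 : (S → ℝ) → ℝ≥0∞) u = ∏ j, h j (u i) (u j) := by
    intro u
    by_cases hu : u ∈ D
    · rw [Set.indicator_of_mem hu]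
      symm
      refine Finset.prod_eq_one (fun j _ => Set.indicator_of_mem (hu j) _)
    · rw [Set.indicator_of_notMem hu]
      symm
      have : ∃ j, u j ∉
          (if j = i then Ioo (0:ℝ) 1 else Ioo 0 1 ∩ Iio ((u i) ^ (p j / p i))) := by
        by_contra hc
        push_neg at hc
        exact hu hc
      obtain ⟨j, hj⟩ := this
      exact Finset.prod_eq_zero (Finset.mem_univ j) (Set.indicator_of_notMem hj _)
  have hFmeas : Measurable (D.indicator (1 : (S → ℝ) → ℝ≥0∞)) :=
    measurable_one.indicator hDset
  have step1 : (Measure.pi fun _ : S => uniform01) D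
      = ∫⁻ x, ((∏ j ∈ Finset.univ.erase i, ∫⁻ y, h j x y ∂uniform01)
          * ∏ j ∈ (Finset.univ.erase i)ᶜ, h j x (Function.update (fun _ => (0:ℝ)) i x j))
          ∂uniform01 := by
    conv_lhs => rw [← lintegral_indicator_one hDset,
      lintegral_eq_lmarginal_univ (μ := fun _ : S => uniform01) (fun _ => (0:ℝ)),
      ← Finset.insert_erase (Finset.mem_univ i),
      lmarginal_insert _ hFmeas (Finset.notMem_erase i _)]
    refine lintegral_congr fun x => ?_
    rw [lmarginal_congr_on (μ := fun _ : S => uniform01)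
        (g := fun u => ∏ j, h j x (u j)) _ (fun u hu => ?_),
      lmarginal_prod (fun j => h j x) (fun j => hmeas_h j x)]
    have hui : u i = x := by
      have := hu i (Finset.notMem_erase i _)
      simpa using this
    rw [hind u, hui]
  rw [step1]
  have hcompl : (Finset.univ.erase i)ᶜ = ({i} : Finset S) := by
    rw [Finset.compl_erase, Finset.compl_univ]
    rfl
  have step2 : ∀ x ∈ Ioo (0:ℝ) 1,
      ((∏ j ∈ Finset.univ.erase i, ∫⁻ y, h j x y ∂uniform01)
        * ∏ j ∈ (Finset.univ.erase i)ᶜ, h j x (Function.update (fun _ => (0:ℝ)) i x j))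
      = ENNReal.ofReal (x ^ a) := by
    intro x hx
    have hx0 := hx.1
    have hx1 := hx.2
    have hfac2 : ∏ j ∈ (Finset.univ.erase i)ᶜ, h j x (Function.update (fun _ => (0:ℝ)) i x j)
        = 1 := by
      rw [hcompl, Finset.prod_singleton, Function.update_self, hh_def]
      simp only [if_pos rfl]
      exact Set.indicator_of_mem hx _
    have hfac1 : ∀ j ∈ Finset.univ.erase i,
        ∫⁻ y, h j x y ∂uniform01 = ENNReal.ofReal (x ^ (p j / p i)) := by
      intro j hj
      have hji : j ≠ i := Finset.ne_of_mem_erase hj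
      have hc1 : x ^ (p j / p i) ≤ 1 :=
        Real.rpow_le_one hx0.le hx1.le (div_nonneg (hp j).le hpi.le)
      have hseteq : Ioo (0:ℝ) 1 ∩ Iio (x ^ (p j / p i)) = Ioo 0 (x ^ (p j / p i)) := by
        ext z
        constructor
        · rintro ⟨⟨hz0, _⟩, hzc⟩; exact ⟨hz0, hzc⟩
        · rintro ⟨hz0, hzc⟩; exact ⟨⟨hz0, lt_of_lt_of_le hzc hc1⟩, hzc⟩
      have hms : MeasurableSet (Ioo (0:ℝ) 1 ∩ Iio (x ^ (p j / p i))) :=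
        measurableSet_Ioo.inter measurableSet_Iio
      rw [hh_def]
      simp only [if_neg hji]
      rw [lintegral_indicator_one hms, uniform01,
        Measure.restrict_apply hms, hseteq]
      rw [Set.inter_eq_left.mpr (fun z hz => Set.mem_Ioo.2
          ⟨(Set.mem_Ioo.1 hz).1, lt_of_lt_of_le (Set.mem_Ioo.1 hz).2 hc1⟩),
        Real.volume_Ioo, sub_zero]
    rw [Finset.prod_congr rfl hfac1, hfac2, mul_one,
      ← ENNReal.ofReal_prod_of_nonneg (fun j _ => Real.rpow_nonneg hx0.le _),
      ← Real.rpow_sum_of_nonneg hx0.le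
        (fun j _ => div_nonneg (hp j).le hpi.le), hsume]
  have haemem : ∀ᵐ x ∂uniform01, x ∈ Ioo (0:ℝ) 1 := by
    show ∀ᵐ x ∂(volume.restrict (Set.Ioo (0:ℝ) 1)), x ∈ Ioo (0:ℝ) 1
    exact ae_restrict_mem measurableSet_Ioo
  have hae : (fun x => (∏ j ∈ Finset.univ.erase i, ∫⁻ y, h j x y ∂uniform01)
        * ∏ j ∈ (Finset.univ.erase i)ᶜ, h j x (Function.update (fun _ => (0:ℝ)) i x j))
      =ᵐ[uniform01] fun x => ENNReal.ofReal (x ^ a) := by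
    filter_upwards [haemem] with x hx using step2 x hx
  rw [lintegral_congr_ae hae]
  have hfin : ∫⁻ x, ENNReal.ofReal (x ^ a) ∂uniform01 = ENNReal.ofReal (1 / (a + 1)) :=
    lintegral_rpow_Ioo ha
  rw [hfin]
  congr 1
  rw [ha_def]
  field_simp
  ring

lemma step_iff {pi pj ui uj : ℝ} (hpi : 0 < pi) (hpj : 0 < pj)
    (hui : ui ∈ Ioo (0:ℝ) 1) (huj : uj ∈ Ioo (0:ℝ) 1) :
    (Real.log pj + -Real.log (-Real.log uj) < Real.log pi + -Real.log (-Real.log ui))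
      ↔ uj < ui ^ (pj / pi) := by
  obtain ⟨hu0, hu1⟩ := Set.mem_Ioo.1 hui
  obtain ⟨hv0, hv1⟩ := Set.mem_Ioo.1 huj
  have hLi : 0 < -Real.log ui := neg_pos.2 (Real.log_neg hu0 hu1)
  have hLj : 0 < -Real.log uj := neg_pos.2 (Real.log_neg hv0 hv1)
  rw [Real.rpow_def_of_pos hu0, ← Real.log_lt_iff_lt_exp hv0]
  have key : (Real.log pj + -Real.log (-Real.log uj)
      < Real.log pi + -Real.log (-Real.log ui))
      ↔ pj * (-Real.log ui) < pi * (-Real.log uj) := by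
    rw [← sub_eq_add_neg, ← sub_eq_add_neg, sub_lt_sub_iff,
      ← Real.log_mul hpj.ne' hLi.ne', ← Real.log_mul hpi.ne' hLj.ne',
      Real.log_lt_log_iff (mul_pos hpj hLi)]
    exact mul_pos hpi hLj
  rw [key]
  rw [show Real.log uj = -(-Real.log uj) by ring, show Real.log ui = -(-Real.log ui) by ring]
  rw [neg_mul, neg_lt_neg_iff, mul_comm (-Real.log ui) (pj / pi),
    div_mul_eq_mul_div, div_lt_iff₀ hpi]
  constructor <;> intro hh <;> nlinarith

lemma gumbel_W {S : Type*} [Fintype S] (p : S → ℝ) (hp : ∀ s, 0 < p s)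
    (hsum : ∑ s, p s = 1) (i : S) :
    gumbelPi S {g : S → ℝ | ∀ j, j ≠ i → Real.log (p j) + g j < Real.log (p i) + g i}
      = ENNReal.ofReal (p i) := by
  classical
  set W := {g : S → ℝ | ∀ j, j ≠ i → Real.log (p j) + g j < Real.log (p i) + g i} with hW_def
  have hWm : MeasurableSet W := by
    have : W = ⋂ j, ⋂ (_ : j ≠ i),
        {g : S → ℝ | Real.log (p j) + g j < Real.log (p i) + g i} := by
      ext g; simp [hW_def, Set.mem_iInter]
    rw [this]
    exact MeasurableSet.iInter fun j => MeasurableSet.iInter fun _ =>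
      measurableSet_lt (measurable_const.add (measurable_pi_apply j))
        (measurable_const.add (measurable_pi_apply i))
  rw [← (measurePreserving_Phi S).measure_preimage hWm.nullMeasurableSet]
  set box : Set (S → ℝ) := {u | ∀ j, u j ∈ Ioo (0:ℝ) 1} with hbox_def
  have hboxc : (Measure.pi fun _ : S => uniform01) boxᶜ = 0 := by
    have hsub : boxᶜ ⊆ ⋃ j, Function.eval j ⁻¹' (Ioo (0:ℝ) 1)ᶜ := by
      intro u hu
      have : ∃ j, u j ∉ Ioo (0:ℝ) 1 := by
        by_contra hc; push_neg at hc; exact hu hc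
      obtain ⟨j, hj⟩ := this
      exact Set.mem_iUnion.2 ⟨j, hj⟩
    refine measure_mono_null hsub (measure_iUnion_null fun j => ?_)
    refine Measure.pi_eval_preimage_null (μ := fun _ : S => uniform01) ?_
    show uniform01 (Ioo (0:ℝ) 1)ᶜ = 0
    rw [uniform01, Measure.restrict_apply measurableSet_Ioo.compl, Set.compl_inter_self]
    simp
  rw [← measure_inter_conull hboxc]
  have hseteq : ((fun (u : S → ℝ) (s : S) => -Real.log (-Real.log (u s))) ⁻¹' W) ∩ box
      = {u : S → ℝ | ∀ j, u j ∈
          (if j = i then Ioo (0:ℝ) 1 else Ioo 0 1 ∩ Iio ((u i) ^ (p j / p i)))} := by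
    ext u
    simp only [Set.mem_inter_iff, Set.mem_preimage, hW_def, hbox_def, Set.mem_setOf_eq]
    constructor
    · rintro ⟨hw, hb⟩ j
      by_cases hj : j = i
      · simp only [hj, if_pos rfl]; exact hb i
      · simp only [if_neg hj]
        exact ⟨hb j, (step_iff (hp i) (hp j) (hb i) (hb j)).1 (hw j hj)⟩
    · intro hu
      have hb : ∀ j, u j ∈ Ioo (0:ℝ) 1 := by
        intro j
        have := hu j
        by_cases hj : j = i
        · simpa [hj] using hu i
        · simp only [if_neg hj] at this
          exact this.1
      refine ⟨fun j hj => ?_, hb⟩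
      have := hu j
      simp only [if_neg hj] at this
      exact (step_iff (hp i) (hp j) (hb i) (hb j)).2 this.2
  rw [hseteq, uniformPi_D p hp hsum i]

lemma strictArgmax_eq {S : Type*} [Fintype S] [Nonempty S] {c g : S → ℝ} {i : S}
    (h : ∀ j, j ≠ i → c j + g j < c i + g i) : strictArgmax c g = i := by
  have hex : ∃ i : S, ∀ j : S, j ≠ i → c j + g j < c i + g i := ⟨i, h⟩
  rw [strictArgmax, dif_pos hex]
  by_contra hne
  have h1 := hex.choose_spec i (fun e => hne e.symm)
  have h2 := h hex.choose hne
  linarith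

lemma gumbel_argmax {S : Type*} [Fintype S] [Nonempty S] (p : S → ℝ) (hp : ∀ s, 0 < p s)
    (hsum : ∑ s, p s = 1) (i : S) :
    gumbelPi S {g : S → ℝ | strictArgmax (fun s => Real.log (p s)) g = i}
      = ENNReal.ofReal (p i) := by
  classical
  have hpil : p i ≤ 1 := by
    calc p i ≤ ∑ s, p s := Finset.single_le_sum (fun s _ => (hp s).le) (Finset.mem_univ i)
    _ = 1 := hsum
  set c : S → ℝ := fun s => Real.log (p s) with hc_def
  set W : S → Set (S → ℝ) :=
    fun l => {g : S → ℝ | ∀ j, j ≠ l → c j + g j < c l + g l} with hWdef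
  have hWval : ∀ l, gumbelPi S (W l) = ENNReal.ofReal (p l) := fun l =>
    gumbel_W p hp hsum l
  have hWm : ∀ l, MeasurableSet (W l) := by
    intro l
    have : W l = ⋂ j, ⋂ (_ : j ≠ l),
        {g : S → ℝ | c j + g j < c l + g l} := by
      ext g; simp [hWdef, Set.mem_iInter]
    rw [this]
    exact MeasurableSet.iInter fun j => MeasurableSet.iInter fun _ =>
      measurableSet_lt (measurable_const.add (measurable_pi_apply j))
        (measurable_const.add (measurable_pi_apply l))
  have hlow : W i ⊆ {g : S → ℝ | strictArgmax c g = i} :=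
    fun g hg => strictArgmax_eq hg
  have hdisj : (↑(Finset.univ.erase i) : Set S).PairwiseDisjoint W := by
    intro x hx y hy hxy
    refine Set.disjoint_left.2 (fun g hgx hgy => ?_)
    have h1 := hgx y hxy.symm
    have h2 := hgy x hxy
    linarith
  have hUval : gumbelPi S (⋃ l ∈ Finset.univ.erase i, W l)
      = ENNReal.ofReal (1 - p i) := by
    rw [measure_biUnion_finset hdisj (fun l _ => hWm l)]
    rw [Finset.sum_congr rfl (fun l _ => hWval l),
      ← ENNReal.ofReal_sum_of_nonneg (fun l _ => (hp l).le),
      Finset.sum_erase_eq_sub (Finset.mem_univ i), hsum]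
  have hhigh : {g : S → ℝ | strictArgmax c g = i} ⊆ (⋃ l ∈ Finset.univ.erase i, W l)ᶜ := by
    intro g hg hgmem
    obtain ⟨l, hl, hgl⟩ := Set.mem_iUnion₂.1 hgmem
    have : strictArgmax c g = l := strictArgmax_eq hgl
    rw [hg] at this
    exact (Finset.ne_of_mem_erase hl) this.symm
  have hcval : gumbelPi S (⋃ l ∈ Finset.univ.erase i, W l)ᶜ = ENNReal.ofReal (p i) := by
    rw [prob_compl_eq_one_sub (Finset.measurableSet_biUnion _ (fun l _ => hWm l)), hUval]
    rw [← ENNReal.ofReal_one, ← ENNReal.ofReal_sub _ (by linarith : (0:ℝ) ≤ 1 - p i)]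
    norm_num
  refine le_antisymm ?_ ?_
  · exact le_trans (measure_mono hhigh) hcval.le
  · exact (hWval i).symm.le.trans (measure_mono hlow)


end GMAux

/-- Correctness of the Gumbel-Max SCM encoding of an MDP: for every `1 ≤ k ≤ T`
and every state sequence `τ`, the probability (under the product Gumbel noise
measure on `Fin T → S → ℝ`) that the Gumbel-Max trajectory agrees with `τ` on
the first `k` steps equals the MDP path probability
`ρ (τ 0) * ∏_{t=0}^{k-2} K (τ t) (pol (τ t)) (τ (t+1))`. -/
theorem gumbelMax_scm_correct {S : Type*} [Fintype S] [Nonempty S] {A : Type*}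
    (ρ : S → ℝ) (hρpos : ∀ s, 0 < ρ s) (hρsum : ∑ s, ρ s = 1)
    (K : S → A → S → ℝ) (hKpos : ∀ s a s', 0 < K s a s')
    (hKsum : ∀ s a, ∑ s', K s a s' = 1)
    (pol : S → A) (T : ℕ) (hT : 1 ≤ T)
    (k : ℕ) (hk1 : 1 ≤ k) (hkT : k ≤ T) (τ : ℕ → S) :
    (Measure.pi (fun _ : Fin T => gumbelPi S))
        {ω : Fin T → S → ℝ | ∀ t < k, gmTraj ρ K pol (extendNoise T ω) t = τ t}
      = ENNReal.ofReal
          (ρ (τ 0) * ∏ t ∈ Finset.range (k - 1), K (τ t) (pol (τ t)) (τ (t + 1))) := by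
  classical
  set P : ℕ → S → ℝ := fun t => match t with
    | 0 => ρ
    | (t+1) => K (τ t) (pol (τ t)) with hP_def
  have hPpos : ∀ t s, 0 < P t s := by
    intro t s; cases t with
    | zero => exact hρpos s
    | succ m => exact hKpos _ _ s
  have hPsum : ∀ t, ∑ s, P t s = 1 := by
    intro t; cases t with
    | zero => exact hρsum
    | succ m => exact hKsum _ _
  have hgm0 : ∀ ω' : ℕ → S → ℝ,
      gmTraj ρ K pol ω' 0 = strictArgmax (fun s => Real.log (ρ s)) (ω' 0) :=
    fun _ => rfl
  have hgms : ∀ (ω' : ℕ → S → ℝ) (t : ℕ), gmTraj ρ K pol ω' (t+1)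
      = strictArgmax (fun s => Real.log
          (K (gmTraj ρ K pol ω' t) (pol (gmTraj ρ K pol ω' t)) s)) (ω' (t+1)) :=
    fun _ _ => rfl
  have hext : ∀ (ω : Fin T → S → ℝ) (t : ℕ) (h : t < T), extendNoise T ω t = ω ⟨t, h⟩ :=
    fun ω t h => dif_pos h
  set Aset : Fin T → Set (S → ℝ) := fun t =>
    if t.val < k then {g : S → ℝ | strictArgmax (fun s => Real.log (P t.val s)) g = τ t.val}
    else Set.univ with hA_def
  have hset : {ω : Fin T → S → ℝ | ∀ t < k, gmTraj ρ K pol (extendNoise T ω) t = τ t}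
      = Set.pi Set.univ Aset := by
    ext ω
    simp only [Set.mem_setOf_eq, Set.mem_pi, Set.mem_univ, forall_true_left]
    constructor
    · intro hgm t
      rw [hA_def]
      dsimp only
      split_ifs with ht
      · obtain ⟨tv, htT⟩ := t
        dsimp only at ht ⊢
        cases tv with
        | zero =>
          have h0 := hgm 0 hk1
          rw [hgm0, hext ω 0 htT] at h0
          exact h0
        | succ m =>
          have h1 := hgm (m+1) ht
          have hm := hgm m (by omega)
          rw [hgms, hm, hext ω (m+1) htT] at h1
          exact h1
      · trivial
    · intro hmem t ht
      revert ht
      induction t with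
      | zero =>
        intro ht
        have h0T : (0:ℕ) < T := lt_of_lt_of_le ht hkT
        have h0 := hmem ⟨0, h0T⟩
        rw [hA_def] at h0
        dsimp only at h0
        rw [if_pos ht] at h0
        rw [hgm0, hext ω 0 h0T]
        exact h0
      | succ m ih =>
        intro ht
        have hm := ih (by omega)
        have hsT : m + 1 < T := lt_of_lt_of_le ht hkT
        have hs := hmem ⟨m+1, hsT⟩
        rw [hA_def] at hs
        dsimp only at hs
        rw [if_pos ht] at hs
        rw [hgms, hm, hext ω (m+1) hsT]
        exact hs
  rw [hset, Measure.pi_pi]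
  have hfac : ∀ t : Fin T, gumbelPi S (Aset t)
      = if t.val < k then ENNReal.ofReal (P t.val (τ t.val)) else 1 := by
    intro t
    rw [hA_def]
    dsimp only
    split_ifs with ht
    · exact GMAux.gumbel_argmax (P t.val) (hPpos t.val) (hPsum t.val) (τ t.val)
    · exact measure_univ
  rw [Finset.prod_congr rfl (fun t _ => hfac t)]
  have hreidx : ∏ t : Fin T, (if t.val < k then ENNReal.ofReal (P t.val (τ t.val)) else 1)
      = ∏ m ∈ Finset.range T, (if m < k then ENNReal.ofReal (P m (τ m)) else 1) :=
    Fin.prod_univ_eq_prod_range (fun m => if m < k then ENNReal.ofReal (P m (τ m)) else 1) T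
  rw [hreidx,
    ← Finset.prod_subset (Finset.range_subset_range.2 hkT)
      (fun x _ hx => if_neg (by simpa using hx)),
    Finset.prod_congr rfl (fun m hm => if_pos (Finset.mem_range.1 hm)),
    ← ENNReal.ofReal_prod_of_nonneg (fun m _ => (hPpos m (τ m)).le)]
  congr 1
  obtain ⟨n, rfl⟩ : ∃ n, k = n + 1 := ⟨k-1, (Nat.succ_pred_eq_of_pos hk1).symm⟩
  rw [Finset.prod_range_succ']
  simp only [Nat.add_sub_cancel]
  rw [mul_comm]
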